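/- arXiv:1311.6462 — 3 statements merged into one kernel-verified Lean document; each statement's English description precedes it below -/
import Mathlib

section
/- For the bicomplex polynomial P_c(w) = w² + c with c = c1 + c2·i2, the n-th forward iterate satisfies P_c^n(z1 + z2·i2) = P_{c1-c2·i1}^n(z1 - z2·i1)·e1 + P_{c1+c2·i1}^n(z1 + z2·i1)·e2 for all natural numbers n, where P_a(z) = z² + a is the complex quadratic polynomial. -/
/- We model the bicomplex numbers `BC` via their idempotent representation:
a bicomplex number `w = w₁·e₁ + w₂·e₂` is identified with the pair `(w₁, w₂) : ℂ × ℂ`,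
which is a ring isomorphism onto the product ring `ℂ × ℂ`. -/
noncomputable section

abbrev BC : Type := ℂ × ℂ

/-- The canonical embedding of `ℂ(i₁)` into the bicomplex numbers. -/
def BC.toBC (z : ℂ) : BC := (z, z)

/-- The imaginary unit `i₁`. -/
def BC.i1 : BC := (Complex.I, Complex.I)

/-- The imaginary unit `i₂`. -/
def BC.i2 : BC := (-Complex.I, Complex.I)

/-- The hyperbolic unit `j = i₁·i₂`. -/
def BC.j : BC := BC.i1 * BC.i2

/-- The idempotent `e₁ = (1 + j)/2`. -/
def BC.e1 : BC := ((1 : BC) + BC.j) / 2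

/-- The idempotent `e₂ = (1 - j)/2`. -/
def BC.e2 : BC := ((1 : BC) - BC.j) / 2

/-- The bicomplex number `z₁ + z₂·i₂`. -/
def BC.mk (z1 z2 : ℂ) : BC := BC.toBC z1 + BC.toBC z2 * BC.i2

/-- The real modulus of a bicomplex number, expressed through its idempotent
components: `‖w₁·e₁ + w₂·e₂‖ = √((|w₁|² + |w₂|²)/2)`. -/
def BC.norm (w : BC) : ℝ := Real.sqrt ((‖w.1‖ ^ 2 + ‖w.2‖ ^ 2) / 2)

/-- The idempotent cartesian product `X₁ ×ₑ X₂`. -/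
def BC.cartE (X1 X2 : Set ℂ) : Set BC :=
  {w : BC | ∃ w1 ∈ X1, ∃ w2 ∈ X2, w = BC.toBC w1 * BC.e1 + BC.toBC w2 * BC.e2}

/-- the iterates of the bicomplex polynomial `P_c(w) = w² + c` decompose
idempotent-component-wise into iterates of the complex quadratic polynomials. -/
theorem stmt8 (c1 c2 z1 z2 : ℂ) (n : ℕ) :
    (fun w : BC => w ^ 2 + BC.mk c1 c2)^[n] (BC.mk z1 z2) =
      BC.toBC ((fun z : ℂ => z ^ 2 + (c1 - c2 * Complex.I))^[n] (z1 - z2 * Complex.I)) * BC.e1 +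
      BC.toBC ((fun z : ℂ => z ^ 2 + (c1 + c2 * Complex.I))^[n] (z1 + z2 * Complex.I)) * BC.e2 := by
  induction n with
  | zero =>
    simp [BC.mk, BC.toBC, BC.i2, BC.e1, BC.e2, BC.j, BC.i1, Prod.ext_iff,
      Prod.mul_def, Prod.add_def, Prod.div_def]
    ring
  | succ n ih =>
    rw [Function.iterate_succ_apply', Function.iterate_succ_apply',
      Function.iterate_succ_apply', ih]
    simp [BC.mk, BC.toBC, BC.i2, BC.e1, BC.e2, BC.j, BC.i1, Prod.ext_iff,
      Prod.mul_def, Prod.add_def, Prod.div_def, Prod.pow_def]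
    ring
end
end

section
/- The bicomplex filled-in Julia set for parameter c = c1 + c2·i2 equals the idempotent cartesian product of the two complex filled-in Julia sets: K_{2,c} = K_{c1-c2·i1} ×_e K_{c1+c2·i1}. -/
/- We model the bicomplex numbers `BC` via their idempotent representation:
a bicomplex number `w = w₁·e₁ + w₂·e₂` is identified with the pair `(w₁, w₂) : ℂ × ℂ`,
which is a ring isomorphism onto the product ring `ℂ × ℂ`. -/
noncomputable section

/-- The complex filled-in Julia set of `z ↦ z² + a`. -/
def Kc (a : ℂ) : Set ℂ :=
  {z : ℂ | ∃ M : ℝ, ∀ n : ℕ, ‖(fun z : ℂ => z ^ 2 + a)^[n] z‖ ≤ M}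

/-- The bicomplex filled-in Julia set of `w ↦ w² + c`. -/
def K2 (c : BC) : Set BC :=
  {w : BC | ∃ M : ℝ, ∀ n : ℕ, BC.norm ((fun w : BC => w ^ 2 + c)^[n] w) ≤ M}


lemma BC.iterate_eq (a b : ℂ) (w : BC) (n : ℕ) :
    (fun w : BC => w ^ 2 + (a, b))^[n] w
      = ((fun z : ℂ => z ^ 2 + a)^[n] w.1, (fun z : ℂ => z ^ 2 + b)^[n] w.2) := by
  have h : (fun w : BC => w ^ 2 + (a, b))
      = Prod.map (fun z : ℂ => z ^ 2 + a) (fun z : ℂ => z ^ 2 + b) := by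
    funext w
    simp [Prod.map, Prod.ext_iff, Prod.pow_fst, Prod.pow_snd]
  rw [h, Prod.map_iterate]
  rfl

lemma BC.fst_le (w : BC) : ‖w.1‖ ≤ Real.sqrt 2 * BC.norm w := by
  rw [BC.norm, ← Real.sqrt_mul (by norm_num)]
  have h1 : ‖w.1‖ = Real.sqrt (‖w.1‖ ^ 2) := by
    rw [Real.sqrt_sq (norm_nonneg _)]
  conv_lhs => rw [h1]
  exact Real.sqrt_le_sqrt (by nlinarith [sq_nonneg ‖w.2‖])

lemma BC.snd_le (w : BC) : ‖w.2‖ ≤ Real.sqrt 2 * BC.norm w := by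
  rw [BC.norm, ← Real.sqrt_mul (by norm_num)]
  have h1 : ‖w.2‖ = Real.sqrt (‖w.2‖ ^ 2) := by
    rw [Real.sqrt_sq (norm_nonneg _)]
  conv_lhs => rw [h1]
  exact Real.sqrt_le_sqrt (by nlinarith [sq_nonneg ‖w.1‖])

lemma BC.norm_le (w : BC) (M1 M2 : ℝ) (h1 : ‖w.1‖ ≤ M1) (h2 : ‖w.2‖ ≤ M2) :
    BC.norm w ≤ Real.sqrt ((M1 ^ 2 + M2 ^ 2) / 2) := by
  apply Real.sqrt_le_sqrt
  have n1 := norm_nonneg w.1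
  have n2 := norm_nonneg w.2
  nlinarith

/-- `K_{2,c} = K_{c₁ - c₂·i₁} ×ₑ K_{c₁ + c₂·i₁}`. -/
theorem stmt9 (c1 c2 : ℂ) :
    K2 (BC.mk c1 c2) =
      BC.cartE (Kc (c1 - c2 * Complex.I)) (Kc (c1 + c2 * Complex.I)) := by
  have he : ∀ w1 w2 : ℂ, BC.toBC w1 * BC.e1 + BC.toBC w2 * BC.e2 = (w1, w2) := by
    intro w1 w2
    simp only [BC.toBC, BC.e1, BC.e2, BC.j, BC.i1, BC.i2, Prod.ext_iff]
    constructor <;>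
      (simp [Prod.fst_mul, Prod.snd_mul, Prod.fst_add, Prod.snd_add,
        Prod.fst_div, Prod.snd_div, Complex.I_mul_I]; try ring)
  have hc : BC.mk c1 c2 = (c1 - c2 * Complex.I, c1 + c2 * Complex.I) := by
    simp only [BC.mk, BC.toBC, BC.i2, Prod.ext_iff, Prod.fst_add, Prod.snd_add,
      Prod.fst_mul, Prod.snd_mul]
    exact ⟨by ring, trivial⟩
  ext w
  simp only [K2, BC.cartE, Kc, Set.mem_setOf_eq, hc]
  constructor
  · rintro ⟨M, hM⟩
    refine ⟨w.1, ⟨Real.sqrt 2 * M, fun n => ?_⟩, w.2, ⟨Real.sqrt 2 * M, fun n => ?_⟩, ?_⟩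
    · have := BC.fst_le ((fun w : BC => w ^ 2 + (c1 - c2 * Complex.I, c1 + c2 * Complex.I))^[n] w)
      rw [BC.iterate_eq] at this
      have hMn := hM n
      rw [BC.iterate_eq] at hMn
      exact this.trans (mul_le_mul_of_nonneg_left hMn (Real.sqrt_nonneg 2))
    · have := BC.snd_le ((fun w : BC => w ^ 2 + (c1 - c2 * Complex.I, c1 + c2 * Complex.I))^[n] w)
      rw [BC.iterate_eq] at this
      have hMn := hM n
      rw [BC.iterate_eq] at hMn
      exact this.trans (mul_le_mul_of_nonneg_left hMn (Real.sqrt_nonneg 2))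
    · rw [he]
  · rintro ⟨w1, ⟨M1, hM1⟩, w2, ⟨M2, hM2⟩, hw⟩
    rw [he] at hw
    subst hw
    refine ⟨Real.sqrt (((max M1 0) ^ 2 + (max M2 0) ^ 2) / 2), fun n => ?_⟩
    rw [BC.iterate_eq]
    exact BC.norm_le _ _ _ ((hM1 n).trans (le_max_left _ _))
      ((hM2 n).trans (le_max_left _ _))
end
end

section
/- Let c = c1 + c2·i2 be a bicomplex number and w1 a fixed point of P_c(w) = w² + c with w1 ∈ J_{c1-c2·i1} ×_e J_{c1+c2·i1}. Then the set of all inverse iterates ∪_{k≥1} P_c^{-k}(w1) is dense in J_{c1-c2·i1} ×_e J_{c1+c2·i1}. -/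
/- We model the bicomplex numbers `BC` via their idempotent representation:
a bicomplex number `w = w₁·e₁ + w₂·e₂` is identified with the pair `(w₁, w₂) : ℂ × ℂ`,
which is a ring isomorphism onto the product ring `ℂ × ℂ`. -/
noncomputable section

lemma BC.mk_eq (c1 c2 : ℂ) :
    BC.mk c1 c2 = (c1 - c2 * Complex.I, c1 + c2 * Complex.I) := by
  simp [BC.mk, BC.toBC, BC.i2, Prod.ext_iff]
  ring

lemma BC.idem_eq (a b : ℂ) :
    BC.toBC a * BC.e1 + BC.toBC b * BC.e2 = (a, b) := by
  have h1 : BC.e1 = ((1:ℂ),(0:ℂ)) := by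
    simp [BC.e1, BC.j, BC.i1, BC.i2, Prod.ext_iff, Complex.ext_iff]
  have h2 : BC.e2 = ((0:ℂ),(1:ℂ)) := by
    simp [BC.e2, BC.j, BC.i1, BC.i2, Prod.ext_iff, Complex.ext_iff]
  simp [h1, h2, BC.toBC, Prod.ext_iff]

lemma BC.iter_prod (c : BC) (v : BC) (k : ℕ) :
    (fun w : BC => w ^ 2 + c)^[k] v =
      ((fun z : ℂ => z ^ 2 + c.1)^[k] v.1, (fun z : ℂ => z ^ 2 + c.2)^[k] v.2) := by
  induction k generalizing v with
  | zero => simp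
  | succ n ih =>
    rw [Function.iterate_succ_apply, ih, Function.iterate_succ_apply,
      Function.iterate_succ_apply]
    simp

/-- if `w₁` is a fixed point of `P_c` lying in
`J_{c₁-c₂·i₁} ×ₑ J_{c₁+c₂·i₁}`, then `⋃_{k ≥ 1} P_c⁻ᵏ(w₁)` is dense in
`J_{c₁-c₂·i₁} ×ₑ J_{c₁+c₂·i₁}`.  (We assume, as known, the corresponding complex
density result for inverse iterates.) -/
theorem stmt18 (c1 c2 : ℂ)
    (hcomplex : ∀ (a : ℂ), ∀ z ∈ frontier (Kc a), ∀ k1 : ℕ, 1 ≤ k1 →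
      frontier (Kc a) ⊆
        closure {v : ℂ | ∃ k : ℕ, k1 ≤ k ∧ (fun z : ℂ => z ^ 2 + a)^[k] v = z})
    (w1 : BC) (hfix : w1 ^ 2 + BC.mk c1 c2 = w1)
    (hw1 : w1 ∈ BC.cartE (frontier (Kc (c1 - c2 * Complex.I)))
        (frontier (Kc (c1 + c2 * Complex.I)))) :
    BC.cartE (frontier (Kc (c1 - c2 * Complex.I)))
        (frontier (Kc (c1 + c2 * Complex.I))) ⊆
      closure {v : BC | ∃ k : ℕ, 1 ≤ k ∧
        (fun w : BC => w ^ 2 + BC.mk c1 c2)^[k] v = w1} := by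
  set a := c1 - c2 * Complex.I with ha
  set b := c1 + c2 * Complex.I with hb
  obtain ⟨u, hu, v, hv, hw1eq⟩ := hw1
  rw [BC.idem_eq] at hw1eq
  subst hw1eq
  rw [BC.mk_eq, ← ha, ← hb] at hfix
  have hfa : u ^ 2 + a = u := congrArg Prod.fst hfix
  have hfb : v ^ 2 + b = v := congrArg Prod.snd hfix
  rintro p ⟨x, hx, y, hy, hpeq⟩
  rw [BC.idem_eq] at hpeq
  subst hpeq
  rw [Metric.mem_closure_iff]
  intro ε hε
  have h1 := hcomplex a u hu 1 le_rfl hx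
  rw [Metric.mem_closure_iff] at h1
  obtain ⟨v1, ⟨k, hk1, hkv⟩, hd1⟩ := h1 ε hε
  have h2 := hcomplex b v hv k hk1 hy
  rw [Metric.mem_closure_iff] at h2
  obtain ⟨v2, ⟨m, hkm, hmv⟩, hd2⟩ := h2 ε hε
  refine ⟨(v1, v2), ⟨m, le_trans hk1 hkm, ?_⟩, ?_⟩
  · rw [BC.iter_prod, BC.mk_eq, ← ha, ← hb]
    refine Prod.ext ?_ hmv
    simp only
    have hm : m = (m - k) + k := (Nat.sub_add_cancel hkm).symm
    rw [hm, Function.iterate_add_apply, hkv]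
    exact Function.iterate_fixed (f := fun z : ℂ => z ^ 2 + a) (x := u) hfa (m - k)
  · rw [Prod.dist_eq]
    exact max_lt hd1 hd2
end
end
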